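/- Let 0 < τ < 1 and let p be a real number with |p| < τ. Define α*(p,τ) = √(1−τ²)·(p√(1−τ²) + τ√(1−p²)) / (τ² − p²). Then α*(p,τ) > 0 and, with f(α) = (1 + αp)/√(1 + 2αp + α²), one has f(α*(p,τ)) = τ. -/

import Mathlib

theorem alphaStar_pos_and_hits_threshold
    (τ p : ℝ) (hτ : 0 < τ) (hτ1 : τ < 1) (hp : |p| < τ) :
    0 < Real.sqrt (1 - τ ^ 2) * (p * Real.sqrt (1 - τ ^ 2) + τ * Real.sqrt (1 - p ^ 2)) /
        (τ ^ 2 - p ^ 2) ∧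
    (fun a : ℝ => (1 + a * p) / Real.sqrt (1 + 2 * a * p + a ^ 2))
      (Real.sqrt (1 - τ ^ 2) * (p * Real.sqrt (1 - τ ^ 2) + τ * Real.sqrt (1 - p ^ 2)) /
        (τ ^ 2 - p ^ 2)) = τ := by
  set s := Real.sqrt (1 - τ ^ 2) with hs_def
  set q := Real.sqrt (1 - p ^ 2) with hq_def
  have hp2 : p ^ 2 < τ ^ 2 := by nlinarith [sq_abs p, abs_nonneg p]
  have hD : 0 < τ ^ 2 - p ^ 2 := by linarith
  have hτ2 : (0:ℝ) < 1 - τ ^ 2 := by nlinarith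
  have hp2' : (0:ℝ) < 1 - p ^ 2 := by nlinarith
  have hs2 : s ^ 2 = 1 - τ ^ 2 := Real.sq_sqrt hτ2.le
  have hq2 : q ^ 2 = 1 - p ^ 2 := Real.sq_sqrt hp2'.le
  have hs0 : 0 < s := Real.sqrt_pos.mpr hτ2
  have hq0 : 0 < q := Real.sqrt_pos.mpr hp2'
  have hsq : s < q := Real.sqrt_lt_sqrt hτ2.le (by linarith)
  have hA : 0 < p * s + τ * q := by nlinarith [neg_abs_le p, abs_nonneg p]
  have hα : 0 < s * (p * s + τ * q) / (τ ^ 2 - p ^ 2) := div_pos (mul_pos hs0 hA) hD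
  refine ⟨hα, ?_⟩
  simp only
  have hx : 0 < q * (τ * q + p * s) / (τ ^ 2 - p ^ 2) :=
    div_pos (mul_pos hq0 (by nlinarith)) hD
  have key : 1 + 2 * (s * (p * s + τ * q) / (τ ^ 2 - p ^ 2)) * p +
      (s * (p * s + τ * q) / (τ ^ 2 - p ^ 2)) ^ 2 =
      (q * (τ * q + p * s) / (τ ^ 2 - p ^ 2)) ^ 2 := by
    field_simp
    linear_combination ((p*s+τ*q)^2 + (τ^2-p^2)*p^2) * hs2 - ((p*s+τ*q)^2 + (τ^2-p^2)*τ^2) * hq2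
  have h1 : 1 + (s * (p * s + τ * q) / (τ ^ 2 - p ^ 2)) * p =
      τ * (q * (τ * q + p * s) / (τ ^ 2 - p ^ 2)) := by
    field_simp
    linear_combination p^2 * hs2 - τ^2 * hq2
  rw [key, Real.sqrt_sq hx.le, h1, mul_div_assoc, div_self hx.ne', mul_one]
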